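/- For a symmetric positive definite k×k matrix Θ and an integer t with 0 < t ≤ k, the supremum over positive semidefinite k×k matrices W of rank at least t of the quantity Σ_{ℓ=1}^t log(λ_ℓ(W)) − Trace(Θ W) equals −t − Σ_{ℓ=k−t+1}^k log(λ_ℓ(Θ)), where λ_ℓ denotes the ℓ-th greatest eigenvalue. Moreover, the supremum is attained at the matrix W = Σ_{ℓ=1}^t (1/β̂_ℓ) v̂_ℓ v̂_ℓᵀ, where Θ = Σ_ℓ β̂_ℓ v̂_ℓ v̂_ℓᵀ is a spectral decomposition of Θ with eigenvalues sorted nondecreasingly. -/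

import Mathlib

/-- `descEig W i` is the `(i+1)`-th greatest eigenvalue of the real symmetric matrix `W`
(junk value `0` if `W` is not symmetric). -/
noncomputable def descEig {k : ℕ} (W : Matrix (Fin k) (Fin k) ℝ) : Fin k → ℝ :=
  fun i => if h : W.IsHermitian then (h.eigenvalues ∘ Tuple.sort h.eigenvalues) i.rev else 0


open Matrix Polynomial Finset in
private lemma charpoly_conj_diag {k : ℕ} (d : Fin k → ℝ) (V : Matrix (Fin k) (Fin k) ℝ)
    (hV : V * Vᵀ = 1) :
    (Vᵀ * Matrix.diagonal d * V).charpoly = ∏ i, (X - C (d i)) := by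
  have hVtV : Vᵀ * V = 1 := mul_eq_one_comm.mp hV
  have hm : charmatrix (Vᵀ * Matrix.diagonal d * V)
      = (C : ℝ →+* ℝ[X]).mapMatrix Vᵀ * charmatrix (Matrix.diagonal d)
        * (C : ℝ →+* ℝ[X]).mapMatrix V := by
    unfold charmatrix
    rw [mul_sub, sub_mul]
    congr 1
    · rw [mul_assoc, (scalar_commute (X : ℝ[X]) (Commute.all _) _).eq, ← mul_assoc,
        ← _root_.map_mul ((C : ℝ →+* ℝ[X]).mapMatrix), hVtV, _root_.map_one, one_mul]
    · rw [← _root_.map_mul ((C : ℝ →+* ℝ[X]).mapMatrix),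
        ← _root_.map_mul ((C : ℝ →+* ℝ[X]).mapMatrix)]
  have hdet : ((C : ℝ →+* ℝ[X]).mapMatrix Vᵀ).det * ((C : ℝ →+* ℝ[X]).mapMatrix V).det = 1 := by
    rw [← det_mul, ← _root_.map_mul ((C : ℝ →+* ℝ[X]).mapMatrix), hVtV, _root_.map_one, det_one]
  have hdiag : charmatrix (Matrix.diagonal d) = Matrix.diagonal (fun i => (X : ℝ[X]) - C (d i)) := by
    ext i j
    rcases eq_or_ne i j with rfl | h
    · simp
    · simp [h, charmatrix_apply_ne _ _ _ h, Matrix.diagonal_apply_ne _ h]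
  rw [Matrix.charpoly, hm, det_mul, det_mul, mul_right_comm, hdet, one_mul, hdiag, det_diagonal]

open Matrix Polynomial Finset in
private lemma eig_multiset {k : ℕ} {A : Matrix (Fin k) (Fin k) ℝ} (hA : A.IsHermitian)
    {d : Fin k → ℝ} {V : Matrix (Fin k) (Fin k) ℝ} (hV : V * Vᵀ = 1)
    (hAd : A = Vᵀ * Matrix.diagonal d * V) :
    Multiset.map hA.eigenvalues Finset.univ.val = Multiset.map d Finset.univ.val := by
  have h1 : A.charpoly = ∏ i, (X - C (d i)) := by rw [hAd]; exact charpoly_conj_diag d V hV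
  have h2 : A.charpoly = ∏ i, (X - C (hA.eigenvalues i)) := by
    have hs := hA.spectral_theorem
    rw [RCLike.ofReal_real_eq_id] at hs
    set U : Matrix (Fin k) (Fin k) ℝ := (hA.eigenvectorUnitary : Matrix (Fin k) (Fin k) ℝ) with hUdef
    have hstar : star U = Uᵀ := by
      rw [Matrix.star_eq_conjTranspose, conjTranspose_eq_transpose_of_trivial]
    have hUtU : Uᵀ * (Uᵀ)ᵀ = 1 := by
      rw [transpose_transpose, ← hstar]
      exact Unitary.star_mul_self_of_mem hA.eigenvectorUnitary.2
    have hs' : A = (Uᵀ)ᵀ * Matrix.diagonal hA.eigenvalues * Uᵀ := by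
      rw [transpose_transpose]
      rw [← hstar]; simpa using hs
    exact (congrArg Matrix.charpoly hs').trans (charpoly_conj_diag _ _ hUtU)
  have h3 := congrArg Polynomial.roots (h2.symm.trans h1)
  rw [Finset.prod_eq_multiset_prod, Finset.prod_eq_multiset_prod] at h3
  rw [show (Multiset.map (fun i => X - C (hA.eigenvalues i)) Finset.univ.val)
      = Multiset.map (fun a => X - C a) (Multiset.map hA.eigenvalues Finset.univ.val) by
        rw [Multiset.map_map]; rfl,
    show (Multiset.map (fun i => X - C (d i)) Finset.univ.val)
      = Multiset.map (fun a => X - C a) (Multiset.map d Finset.univ.val) by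
        rw [Multiset.map_map]; rfl,
    roots_multiset_prod_X_sub_C, roots_multiset_prod_X_sub_C] at h3
  exact h3

private lemma multiset_map_comp_perm {k : ℕ} (f : Fin k → ℝ) (σ : Equiv.Perm (Fin k)) :
    Multiset.map (f ∘ σ) Finset.univ.val = Multiset.map f Finset.univ.val := by
  rw [Fin.univ_val_map, Fin.univ_val_map]
  exact Multiset.coe_eq_coe.mpr (σ.ofFn_comp_perm f)

private lemma mono_eq_of_multiset_eq {k : ℕ} {f g : Fin k → ℝ}
    (h : Multiset.map f Finset.univ.val = Multiset.map g Finset.univ.val)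
    (hf : Monotone f) (hg : Monotone g) : f = g := by
  have hl : List.ofFn f = List.ofFn g := by
    apply List.Perm.eq_of_sortedLE hf.sortedLE_ofFn hg.sortedLE_ofFn
    rw [← Multiset.coe_eq_coe, ← Fin.univ_val_map, ← Fin.univ_val_map]
    exact h
  exact List.ofFn_injective hl

open Matrix Finset in
private lemma sum_smul_vecMulVec {k : ℕ} (c : Fin k → ℝ) (v : Fin k → Fin k → ℝ) :
    (∑ ℓ, c ℓ • Matrix.vecMulVec (v ℓ) (v ℓ))
      = (Matrix.of v)ᵀ * Matrix.diagonal c * Matrix.of v := by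
  rw [Matrix.mul_assoc]
  ext a b
  simp only [Matrix.sum_apply, Matrix.smul_apply, Matrix.vecMulVec_apply, smul_eq_mul,
    Matrix.mul_apply, Matrix.diagonal_mul, Matrix.transpose_apply, Matrix.of_apply]
  refine Finset.sum_congr rfl fun ℓ _ => ?_
  rw [show (∑ x, Matrix.diagonal c ℓ x * v x b) = c ℓ * v ℓ b by
    simp [Matrix.diagonal_apply, ite_mul]]
  ring

open Matrix Finset in
private lemma isHermitian_decomp {k : ℕ} (c : Fin k → ℝ) (v : Fin k → Fin k → ℝ) :
    (∑ ℓ, c ℓ • Matrix.vecMulVec (v ℓ) (v ℓ)).IsHermitian := by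
  unfold Matrix.IsHermitian
  ext a b
  simp [Matrix.conjTranspose_apply, Matrix.sum_apply, Matrix.vecMulVec_apply]
  exact Finset.sum_congr rfl fun ℓ _ => by ring

open Matrix Finset in
private lemma descEig_decomp {k : ℕ} {c : Fin k → ℝ} {v : Fin k → Fin k → ℝ}
    (horth : ∀ i j : Fin k, (∑ a, v i a * v j a) = if i = j then 1 else 0)
    (hmono : Monotone c) :
    descEig (∑ ℓ, c ℓ • Matrix.vecMulVec (v ℓ) (v ℓ)) = fun i => c i.rev := by
  have hVVt : Matrix.of v * (Matrix.of v)ᵀ = 1 := by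
    ext i j
    simpa [Matrix.mul_apply, Matrix.one_apply] using horth i j
  have hH := isHermitian_decomp c v
  have h1 : Multiset.map hH.eigenvalues Finset.univ.val = Multiset.map c Finset.univ.val :=
    eig_multiset hH hVVt (sum_smul_vecMulVec c v)
  have h2 : (hH.eigenvalues ∘ Tuple.sort hH.eigenvalues) = c := by
    apply mono_eq_of_multiset_eq _ (Tuple.monotone_sort _) hmono
    rw [multiset_map_comp_perm hH.eigenvalues (Tuple.sort hH.eigenvalues)]
    exact h1
  funext i
  rw [descEig, dif_pos hH, h2]

open Matrix Finset in
/-- For `Θ ≻ 0` and `0 < t ≤ k`, the supremum over positive semidefinite `W` with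
`rank W ≥ t` of `∑_{ℓ=1}^t log λ_ℓ(W) − Trace(Θ W)` equals
`−t − ∑_{ℓ=k−t+1}^k log λ_ℓ(Θ)`, and it is attained at
`Ŵ = ∑_{ℓ=1}^t (1/β_ℓ) v_ℓ v_ℓᵀ`, where `Θ = ∑_ℓ β_ℓ v_ℓ v_ℓᵀ` is a spectral
decomposition of `Θ` with eigenvalues sorted nondecreasingly. -/
theorem stmt_3 (k t : ℕ) (ht : 0 < t) (htk : t ≤ k)
    (Θ : Matrix (Fin k) (Fin k) ℝ) (hΘ : Θ.PosDef)
    (β : Fin k → ℝ) (v : Fin k → Fin k → ℝ)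
    (hβmono : Monotone β)
    (horth : ∀ i j : Fin k, (∑ a, v i a * v j a) = if i = j then 1 else 0)
    (hdecomp : Θ = ∑ ℓ : Fin k, β ℓ • Matrix.vecMulVec (v ℓ) (v ℓ)) :
    (((∑ ℓ : Fin k, if (ℓ : ℕ) < t then (β ℓ)⁻¹ • Matrix.vecMulVec (v ℓ) (v ℓ) else 0
        : Matrix (Fin k) (Fin k) ℝ)).PosSemidef ∧
      t ≤ (∑ ℓ : Fin k, if (ℓ : ℕ) < t then (β ℓ)⁻¹ • Matrix.vecMulVec (v ℓ) (v ℓ) else 0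
        : Matrix (Fin k) (Fin k) ℝ).rank ∧
      (∑ i : Fin k, if (i : ℕ) < t then
          Real.log (descEig (∑ ℓ : Fin k, if (ℓ : ℕ) < t then
            (β ℓ)⁻¹ • Matrix.vecMulVec (v ℓ) (v ℓ) else 0) i) else 0)
        - (Θ * (∑ ℓ : Fin k, if (ℓ : ℕ) < t then
            (β ℓ)⁻¹ • Matrix.vecMulVec (v ℓ) (v ℓ) else 0)).trace
        = -(t : ℝ) - ∑ i : Fin k, if k - t ≤ (i : ℕ) then Real.log (descEig Θ i) else 0) ∧
    (∀ W : Matrix (Fin k) (Fin k) ℝ, W.PosSemidef → t ≤ W.rank →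
      (∑ i : Fin k, if (i : ℕ) < t then Real.log (descEig W i) else 0) - (Θ * W).trace
        ≤ -(t : ℝ) - ∑ i : Fin k, if k - t ≤ (i : ℕ) then Real.log (descEig Θ i) else 0) := by
  classical
  set V : Matrix (Fin k) (Fin k) ℝ := Matrix.of v with hVdef
  have hVVt : V * Vᵀ = 1 := by
    ext i j
    simpa [hVdef, Matrix.mul_apply, Matrix.one_apply] using horth i j
  have hVtV : Vᵀ * V = 1 := mul_eq_one_comm.mp hVVt
  have hdetV : IsUnit V.det := by
    refine IsUnit.of_mul_eq_one Vᵀ.det ?_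
    rw [← Matrix.det_mul, hVVt, Matrix.det_one]
  have hdetVt : IsUnit Vᵀ.det := by
    refine IsUnit.of_mul_eq_one V.det ?_
    rw [← Matrix.det_mul, hVtV, Matrix.det_one]
  have hΘeq : Θ = Vᵀ * Matrix.diagonal β * V := by
    rw [hdecomp, sum_smul_vecMulVec]
  have hdescΘ : descEig Θ = fun i => β i.rev := by
    rw [hdecomp]; exact descEig_decomp horth hβmono
  have hβpos : ∀ ℓ, 0 < β ℓ := by
    intro ℓ
    have h1 : descEig Θ ℓ.rev = β ℓ := by rw [hdescΘ]; simp
    have h2 : 0 < descEig Θ ℓ.rev := by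
      rw [descEig, dif_pos hΘ.isHermitian]
      exact hΘ.eigenvalues_pos _
    rwa [h1] at h2
  -- the candidate maximizer
  set γ : Fin k → ℝ := fun ℓ => if (ℓ : ℕ) < t then (β ℓ)⁻¹ else 0 with hγdef
  have hγnonneg : ∀ ℓ, 0 ≤ γ ℓ := by
    intro ℓ; dsimp [γ]; split
    · exact (inv_pos.mpr (hβpos ℓ)).le
    · exact le_refl _
  have hγanti : Antitone γ := by
    intro a b hab
    dsimp [γ]
    rcases lt_or_ge (b : ℕ) t with hbt | hbt
    · have hat : (a : ℕ) < t := lt_of_le_of_lt (by exact_mod_cast hab) hbt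
      rw [if_pos hat, if_pos hbt]
      exact inv_anti₀ (hβpos a) (hβmono hab)
    · rw [if_neg (not_lt.mpr hbt)]
      split
      · exact (inv_pos.mpr (hβpos a)).le
      · exact le_refl _
  set E : Matrix (Fin k) (Fin k) ℝ :=
    (∑ ℓ : Fin k, if (ℓ : ℕ) < t then (β ℓ)⁻¹ • Matrix.vecMulVec (v ℓ) (v ℓ) else 0) with hEdef
  have hEγ : E = ∑ ℓ, γ ℓ • Matrix.vecMulVec (v ℓ) (v ℓ) := by
    rw [hEdef]
    refine Finset.sum_congr rfl fun ℓ _ => ?_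
    dsimp [γ]; split <;> simp
  have hEmat : E = Vᵀ * Matrix.diagonal γ * V := by rw [hEγ, sum_smul_vecMulVec]
  have hcardt : Fintype.card {i : Fin k // (i : ℕ) < t} = t := by
    have e : {i : Fin k // (i : ℕ) < t} ≃ Fin t :=
      ⟨fun i => ⟨i.1, i.2⟩, fun j => ⟨⟨j.1, j.2.trans_le htk⟩, j.2⟩,
        fun i => rfl, fun j => rfl⟩
    rw [Fintype.card_congr e, Fintype.card_fin]
  have hone : (∑ i : Fin k, if (i : ℕ) < t then (1 : ℝ) else 0) = t := by
    rw [Finset.sum_boole, ← Fintype.card_subtype, hcardt]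
  -- descEig of E
  have horth' : ∀ i j : Fin k, (∑ a, v i.rev a * v j.rev a) = if i = j then 1 else 0 := by
    intro i j
    rw [horth i.rev j.rev]
    simp [Fin.rev_inj]
  have hγrevmono : Monotone fun m : Fin k => γ m.rev := fun a b hab =>
    hγanti (Fin.rev_le_rev.mpr hab)
  have hErev : E = ∑ ℓ : Fin k, (fun m : Fin k => γ m.rev) ℓ •
      Matrix.vecMulVec ((fun m : Fin k => v m.rev) ℓ) ((fun m : Fin k => v m.rev) ℓ) := by
    rw [hEγ, ← Equiv.sum_comp (Fin.revPerm) (fun ℓ => γ ℓ • Matrix.vecMulVec (v ℓ) (v ℓ))]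
    rfl
  have hdescE : descEig E = γ := by
    rw [hErev, descEig_decomp horth' hγrevmono]
    funext i
    simp [Fin.rev_rev]
  -- trace at the maximizer
  have htraceE : (Θ * E).trace = t := by
    rw [hΘeq, hEmat,
      show Vᵀ * Matrix.diagonal β * V * (Vᵀ * Matrix.diagonal γ * V)
          = Vᵀ * (Matrix.diagonal β * ((V * Vᵀ) * (Matrix.diagonal γ * V))) by
        simp only [Matrix.mul_assoc],
      hVVt, Matrix.one_mul, Matrix.trace_mul_comm,
      show Matrix.diagonal β * (Matrix.diagonal γ * V) * Vᵀ
          = Matrix.diagonal β * Matrix.diagonal γ * (V * Vᵀ) by simp only [Matrix.mul_assoc],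
      hVVt, Matrix.mul_one, Matrix.diagonal_mul_diagonal, Matrix.trace_diagonal]
    rw [← hone]
    refine Finset.sum_congr rfl fun i _ => ?_
    dsimp [γ]
    split
    · exact mul_inv_cancel₀ (hβpos i).ne'
    · exact mul_zero _
  -- RHS rewriting
  have hRHS : (∑ i : Fin k, if k - t ≤ (i : ℕ) then Real.log (descEig Θ i) else 0)
      = ∑ i : Fin k, if (i : ℕ) < t then Real.log (β i) else 0 := by
    rw [hdescΘ,
      ← Equiv.sum_comp (Fin.revPerm)
        (fun i : Fin k => if k - t ≤ (i : ℕ) then Real.log (β i.rev) else 0)]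
    refine Finset.sum_congr rfl fun i _ => ?_
    have h1 : (Fin.revPerm i : Fin k) = i.rev := rfl
    rw [h1, Fin.rev_rev]
    have hiv := i.isLt
    have hcond : (k - t ≤ ((i.rev : Fin k) : ℕ)) ↔ (i : ℕ) < t := by
      rw [Fin.val_rev]; omega
    by_cases h : (i : ℕ) < t
    · rw [if_pos (hcond.mpr h), if_pos h]
    · rw [if_neg (fun hh => h (hcond.mp hh)), if_neg h]
  refine ⟨⟨?_, ?_, ?_⟩, ?_⟩
  · -- PosSemidef
    rw [hEmat]
    have hdiagPSD : (Matrix.diagonal γ).PosSemidef :=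
      Matrix.posSemidef_diagonal_iff.mpr hγnonneg
    have h := hdiagPSD.mul_mul_conjTranspose_same Vᵀ
    rwa [Matrix.conjTranspose_eq_transpose_of_trivial, Matrix.transpose_transpose] at h
  · -- rank
    have hrankE : E.rank = t := by
      rw [hEmat, Matrix.rank_mul_eq_left_of_isUnit_det V _ hdetV,
        Matrix.rank_mul_eq_right_of_isUnit_det Vᵀ _ hdetVt, Matrix.rank_diagonal, ← hcardt]
      apply Fintype.card_congr
      apply Equiv.subtypeEquivRight
      intro x
      dsimp [γ]
      constructor
      · intro h
        by_contra hx
        rw [if_neg hx] at h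
        exact h rfl
      · intro h
        rw [if_pos h]
        exact (inv_pos.mpr (hβpos x)).ne'
    rw [hrankE]
  · -- value at the maximizer
    rw [hdescE, htraceE, hRHS]
    have hval : (∑ i : Fin k, if (i : ℕ) < t then Real.log (γ i) else 0)
        = -∑ i : Fin k, (if (i : ℕ) < t then Real.log (β i) else 0) := by
      rw [← Finset.sum_neg_distrib]
      refine Finset.sum_congr rfl fun i _ => ?_
      by_cases h : (i : ℕ) < t
      · rw [if_pos h, if_pos h]
        dsimp [γ]
        rw [if_pos h, Real.log_inv]
      · rw [if_neg h, if_neg h, neg_zero]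
    rw [hval]
    ring
  · -- the upper bound
    intro W hW hrank
    have hH : W.IsHermitian := hW.1
    set μ : Fin k → ℝ := hH.eigenvalues with hμdef
    set s : Equiv.Perm (Fin k) := Tuple.sort μ with hsdef
    set g : Fin k → ℝ := fun i => (μ ∘ s) i.rev with hgdef
    have hdescW : descEig W = g := by
      funext i
      simp only [descEig, dif_pos hH]; rfl
    have hganti : Antitone g := fun a b hab => Tuple.monotone_sort μ (Fin.rev_le_rev.mpr hab)
    have hgnonneg : ∀ i, 0 ≤ g i := fun i => hW.eigenvalues_nonneg _
    have hμnonneg : ∀ i, 0 ≤ μ i := fun i => hW.eigenvalues_nonneg _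
    have hgpos : ∀ i : Fin k, (i : ℕ) < t → 0 < g i := by
      intro i hit
      rcases (hgnonneg i).lt_or_eq with h | h
      · exact h
      have hzero : (μ ∘ s) i.rev = 0 := h.symm
      exfalso
      have key : ∀ a : Fin k, μ a ≠ 0 → i.rev < s.symm a := by
        intro a ha
        by_contra hle
        push_neg at hle
        have h1 : (μ ∘ s) (s.symm a) ≤ (μ ∘ s) i.rev := Tuple.monotone_sort μ hle
        have h2 : (μ ∘ s) (s.symm a) = μ a := by simp
        rw [h2, hzero] at h1
        exact ha (le_antisymm h1 (hμnonneg a))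
      have hcle : Fintype.card {a : Fin k // μ a ≠ 0} ≤ Fintype.card {j : Fin k // i.rev < j} :=
        Fintype.card_le_of_injective (fun a => ⟨s.symm a.1, key a.1 a.2⟩)
          (fun a b hab => Subtype.ext (s.symm.injective (congrArg Subtype.val hab)))
      have hIoi : Fintype.card {j : Fin k // i.rev < j} = k - 1 - ((i.rev : Fin k) : ℕ) := by
        rw [Fintype.card_subtype, Finset.filter_lt_eq_Ioi, Fin.card_Ioi]
      have hrk : W.rank = Fintype.card {a : Fin k // μ a ≠ 0} := hH.rank_eq_card_non_zero_eigs
      have hiv := i.isLt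
      have hrv : ((i.rev : Fin k) : ℕ) = k - 1 - (i : ℕ) := by rw [Fin.val_rev]; omega
      rw [hrk] at hrank
      omega
    -- spectral decomposition of W
    set U : Matrix (Fin k) (Fin k) ℝ := (hH.eigenvectorUnitary : Matrix (Fin k) (Fin k) ℝ)
      with hUdef
    have hstarU : star U = Uᵀ := by
      rw [Matrix.star_eq_conjTranspose, Matrix.conjTranspose_eq_transpose_of_trivial]
    have hUUt : U * Uᵀ = 1 := by
      rw [← hstarU]
      exact Unitary.mul_star_self_of_mem hH.eigenvectorUnitary.2
    have hUtU : Uᵀ * U = 1 := mul_eq_one_comm.mp hUUt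
    have hWeq : W = U * Matrix.diagonal μ * Uᵀ := by
      have hsp := hH.spectral_theorem
      rw [RCLike.ofReal_real_eq_id] at hsp
      rw [← hstarU]
      simpa using hsp
    set G : Matrix (Fin k) (Fin k) ℝ := V * U with hGdef
    have htrace : (Θ * W).trace = ∑ i, ∑ j, β i * μ j * (G i j) ^ 2 := by
      rw [hΘeq, hWeq,
        show Vᵀ * Matrix.diagonal β * V * (U * Matrix.diagonal μ * Uᵀ)
            = Vᵀ * (Matrix.diagonal β * (V * (U * (Matrix.diagonal μ * Uᵀ)))) by
          simp only [Matrix.mul_assoc],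
        Matrix.trace_mul_comm,
        show Matrix.diagonal β * (V * (U * (Matrix.diagonal μ * Uᵀ))) * Vᵀ
            = Matrix.diagonal β * (G * (Matrix.diagonal μ * Gᵀ)) by
          rw [hGdef, Matrix.transpose_mul]; simp only [Matrix.mul_assoc],
        Matrix.trace]
      refine Finset.sum_congr rfl fun i _ => ?_
      rw [Matrix.diag_apply, Matrix.diagonal_mul, Matrix.mul_apply, Finset.mul_sum]
      refine Finset.sum_congr rfl fun j _ => ?_
      rw [Matrix.diagonal_mul, Matrix.transpose_apply]
      ring
    have hDS : (Matrix.of fun i j => (G i j) ^ 2) ∈ doublyStochastic ℝ (Fin k) := by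
      rw [mem_doublyStochastic_iff_sum]
      refine ⟨fun i j => sq_nonneg _, fun i => ?_, fun j => ?_⟩
      · have h1 : G * Gᵀ = 1 := by
          rw [hGdef, Matrix.transpose_mul,
            show V * U * (Uᵀ * Vᵀ) = V * ((U * Uᵀ) * Vᵀ) by simp only [Matrix.mul_assoc],
            hUUt, Matrix.one_mul, hVVt]
        have h2 := congrFun (congrFun h1 i) i
        rw [Matrix.mul_apply] at h2
        rw [show (∑ j, Matrix.of (fun i j => (G i j) ^ 2) i j) = ∑ j, G i j * Gᵀ j i by
          refine Finset.sum_congr rfl fun j _ => ?_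
          rw [Matrix.of_apply, Matrix.transpose_apply]; ring]
        rw [h2, Matrix.one_apply_eq]
      · have h1 : Gᵀ * G = 1 := by
          rw [hGdef, Matrix.transpose_mul,
            show Uᵀ * Vᵀ * (V * U) = Uᵀ * ((Vᵀ * V) * U) by simp only [Matrix.mul_assoc],
            hVtV, Matrix.one_mul, hUtU]
        have h2 := congrFun (congrFun h1 j) j
        rw [Matrix.mul_apply] at h2
        rw [show (∑ i, Matrix.of (fun i j => (G i j) ^ 2) i j) = ∑ i, Gᵀ j i * G i j by
          refine Finset.sum_congr rfl fun i _ => ?_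
          rw [Matrix.of_apply, Matrix.transpose_apply]; ring]
        rw [h2, Matrix.one_apply_eq]
    obtain ⟨w, hw0, hw1, hwP⟩ := exists_eq_sum_perm_of_mem_doublyStochastic hDS
    have hP : ∀ (σ : Equiv.Perm (Fin k)) (i j : Fin k),
        (σ.permMatrix ℝ) i j = if j = σ i then 1 else 0 := by
      intro σ i j
      simp [Equiv.Perm.permMatrix, PEquiv.toMatrix_apply, Equiv.toPEquiv_apply, eq_comm]
    have hc : ∀ i j, (G i j) ^ 2 = ∑ σ : Equiv.Perm (Fin k), w σ * (σ.permMatrix ℝ) i j := by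
      intro i j
      have h := congrFun (congrFun hwP i) j
      simp only [Matrix.sum_apply, Matrix.smul_apply, smul_eq_mul, Matrix.of_apply] at h
      exact h.symm
    have htrace2 : (Θ * W).trace = ∑ σ : Equiv.Perm (Fin k), w σ * ∑ i, β i * μ (σ i) := by
      rw [htrace]
      rw [show (∑ i, ∑ j, β i * μ j * (G i j) ^ 2)
          = ∑ i, ∑ j, ∑ σ : Equiv.Perm (Fin k), w σ * (β i * μ j * (σ.permMatrix ℝ) i j) by
        refine Finset.sum_congr rfl fun i _ => Finset.sum_congr rfl fun j _ => ?_
        rw [hc i j, Finset.mul_sum]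
        exact Finset.sum_congr rfl fun σ _ => by ring]
      rw [show (∑ i, ∑ j, ∑ σ : Equiv.Perm (Fin k), w σ * (β i * μ j * (σ.permMatrix ℝ) i j))
          = ∑ i, ∑ σ : Equiv.Perm (Fin k), ∑ j, w σ * (β i * μ j * (σ.permMatrix ℝ) i j) by
        exact Finset.sum_congr rfl fun i _ => Finset.sum_comm,
        Finset.sum_comm]
      refine Finset.sum_congr rfl fun σ _ => ?_
      rw [Finset.mul_sum]
      refine Finset.sum_congr rfl fun i _ => ?_
      rw [show (∑ j, w σ * (β i * μ j * (σ.permMatrix ℝ) i j))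
          = ∑ j, (if j = σ i then w σ * (β i * μ j) else 0) by
        refine Finset.sum_congr rfl fun j _ => ?_
        rw [hP]
        split <;> ring,
        Finset.sum_ite_eq' Finset.univ (σ i) (fun j => w σ * (β i * μ j))]
      simp
    -- rearrangement
    have hav : Antivary β g := hβmono.antivary hganti
    have hμg : ∀ a : Fin k, μ a = g ((s.symm.trans Fin.revPerm) a) := by
      intro a
      show μ a = (μ ∘ s) (Fin.rev (Fin.revPerm (s.symm a)))
      simp
    have hrearr : ∀ σ : Equiv.Perm (Fin k), (∑ i, β i * g i) ≤ ∑ i, β i * μ (σ i) := by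
      intro σ
      calc (∑ i, β i * g i)
          ≤ ∑ i, β i * g ((σ.trans (s.symm.trans Fin.revPerm)) i) :=
            hav.sum_mul_le_sum_mul_comp_perm
        _ = ∑ i, β i * μ (σ i) :=
            Finset.sum_congr rfl fun i _ => by rw [hμg (σ i)]; rfl
    have htr_ge : (∑ i, β i * g i) ≤ (Θ * W).trace := by
      rw [htrace2, show (∑ i, β i * g i) = ∑ σ : Equiv.Perm (Fin k), w σ * ∑ i, β i * g i by
        rw [← Finset.sum_mul, hw1, one_mul]]
      exact Finset.sum_le_sum fun σ _ => mul_le_mul_of_nonneg_left (hrearr σ) (hw0 σ)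
    have hdrop : (∑ i : Fin k, if (i : ℕ) < t then β i * g i else 0) ≤ ∑ i, β i * g i := by
      refine Finset.sum_le_sum fun i _ => ?_
      split
      · exact le_refl _
      · exact mul_nonneg (hβpos i).le (hgnonneg i)
    have hlog : ∀ i : Fin k, (i : ℕ) < t →
        Real.log (g i) - β i * g i ≤ -1 - Real.log (β i) := by
      intro i hit
      have hb := hβpos i
      have hgp := hgpos i hit
      have h1 := Real.log_le_sub_one_of_pos (mul_pos hb hgp)
      rw [Real.log_mul hb.ne' hgp.ne'] at h1
      linarith
    rw [hdescW, hRHS]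
    have step1 : (∑ i : Fin k, if (i : ℕ) < t then Real.log (g i) else 0) - (Θ * W).trace
        ≤ (∑ i : Fin k, if (i : ℕ) < t then Real.log (g i) else 0)
          - ∑ i : Fin k, (if (i : ℕ) < t then β i * g i else 0) := by
      have := le_trans hdrop htr_ge
      linarith
    refine le_trans step1 ?_
    rw [← Finset.sum_sub_distrib]
    have step2 : (∑ i : Fin k, ((if (i : ℕ) < t then Real.log (g i) else 0)
          - (if (i : ℕ) < t then β i * g i else 0)))
        ≤ ∑ i : Fin k, (if (i : ℕ) < t then (-1 - Real.log (β i)) else 0) := by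
      refine Finset.sum_le_sum fun i _ => ?_
      by_cases h : (i : ℕ) < t
      · rw [if_pos h, if_pos h, if_pos h]
        exact hlog i h
      · rw [if_neg h, if_neg h, if_neg h, sub_zero]
    refine le_trans step2 (le_of_eq ?_)
    rw [show (∑ i : Fin k, if (i : ℕ) < t then (-1 - Real.log (β i)) else 0)
        = ∑ i : Fin k, (-(if (i : ℕ) < t then (1:ℝ) else 0)
            - (if (i : ℕ) < t then Real.log (β i) else 0)) by
      refine Finset.sum_congr rfl fun i _ => ?_
      by_cases h : (i : ℕ) < t
      · rw [if_pos h, if_pos h, if_pos h]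
      · rw [if_neg h, if_neg h, if_neg h]; ring,
      Finset.sum_sub_distrib, Finset.sum_neg_distrib, hone]
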